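/- arXiv:2408.13490 — 5 statements merged into one kernel-verified Lean document; each statement's English description precedes it below -/
import Mathlib

section
/- Let x_{ij}, 1 ≤ i,j ≤ n, be independent complex random variables with mean 0, unit variance, satisfying the Lindeberg condition. Let N_n = #{(i,j) : |x_{ij}| > n^{3/4}}. Then there exists a constant b > 0 such that for all sufficiently large n, P(N_n > n^{3/4}) ≤ 2 e^{−b n^{3/4}}. -/
open MeasureTheory ProbabilityTheory Filter Finset

/-- Let `N_n = #{(i,j) : i,j ≤ n, |x_{ij}| > n^{3/4}}`.  There is a constant `b > 0` such
that for all large `n`, `P(N_n > n^{3/4}) ≤ 2 exp(−b n^{3/4})`. -/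
theorem stmt_6 {Ω : Type*} [MeasureSpace Ω] [IsProbabilityMeasure (ℙ : Measure Ω)]
    (x : ℕ → ℕ → Ω → ℂ)
    (hmeas : ∀ i j, Measurable (x i j))
    (hindep : iIndepFun (fun p : ℕ × ℕ => x p.1 p.2) ℙ)
    (hint : ∀ i j, Integrable (x i j) ℙ)
    (hmean : ∀ i j, ∫ ω, x i j ω ∂ℙ = 0)
    (hint2 : ∀ i j, Integrable (fun ω => ‖x i j ω‖ ^ 2) ℙ)
    (hvar : ∀ i j, ∫ ω, ‖x i j ω‖ ^ 2 ∂ℙ = 1)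
    (hLind : ∀ η : ℝ, 0 < η →
      Tendsto (fun n : ℕ => (1 / (n : ℝ) ^ 2) * ∑ i ∈ range n, ∑ j ∈ range n,
          ∫ ω, ‖x i j ω‖ ^ 2 * (if η * Real.sqrt n < ‖x i j ω‖ then (1:ℝ) else 0) ∂ℙ)
        atTop (nhds 0)) :
    ∃ b : ℝ, 0 < b ∧ ∃ N : ℕ, ∀ n ≥ N,
      ℙ {ω | (n : ℝ) ^ ((3:ℝ)/4) <
          (((range n ×ˢ range n).filter
            (fun p => (n : ℝ) ^ ((3:ℝ)/4) < ‖x p.1 p.2 ω‖)).card : ℝ)}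
        ≤ ENNReal.ofReal (2 * Real.exp (-b * (n : ℝ) ^ ((3:ℝ)/4))) := by
  classical
  refine ⟨1/2, by norm_num, ?_⟩
  have hL := hLind 1 one_pos
  rw [Metric.tendsto_atTop] at hL
  obtain ⟨N0, hN0⟩ := hL (1/4) (by norm_num)
  refine ⟨max N0 1, fun n hn => ?_⟩
  have hn0 : N0 ≤ n := le_trans (le_max_left _ _) hn
  have hn1 : 1 ≤ n := le_trans (le_max_right _ _) hn
  have hn1' : (1:ℝ) ≤ (n:ℝ) := by exact_mod_cast hn1
  have hnpos : (0:ℝ) < (n:ℝ) := lt_of_lt_of_le one_pos hn1'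
  set a : ℝ := (n:ℝ) ^ ((3:ℝ)/4) with ha
  have hapos : 0 < a := Real.rpow_pos_of_pos hnpos _
  set s : Finset (ℕ × ℕ) := range n ×ˢ range n with hs
  set Y : ℕ × ℕ → Ω → ℝ := fun p ω => if a < ‖x p.1 p.2 ω‖ then 1 else 0 with hY
  have hYmeas : ∀ p, Measurable (Y p) := fun p =>
    Measurable.ite (measurableSet_lt measurable_const (hmeas p.1 p.2).norm)
      measurable_const measurable_const
  have hYindep : iIndepFun Y ℙ := by
    have h := hindep.comp (fun _ (z : ℂ) => if a < ‖z‖ then (1:ℝ) else 0)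
      (fun _ => Measurable.ite (measurableSet_lt measurable_const measurable_norm)
        measurable_const measurable_const)
    exact h
  have hY01 : ∀ p ω, Y p ω = 0 ∨ Y p ω = 1 := fun p ω => by
    rw [hY]; dsimp only; split_ifs <;> simp
  have hYnonneg : ∀ p ω, 0 ≤ Y p ω := fun p ω => by
    rcases hY01 p ω with h | h <;> rw [h] <;> norm_num
  set q : ℕ × ℕ → ℝ := fun p => (ℙ {ω | a < ‖x p.1 p.2 ω‖}).toReal with hq
  have hqnonneg : ∀ p, 0 ≤ q p := fun p => ENNReal.toReal_nonneg
  have hqms : ∀ p : ℕ × ℕ, MeasurableSet {ω | a < ‖x p.1 p.2 ω‖} := fun p =>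
    measurableSet_lt measurable_const (hmeas p.1 p.2).norm
  have hYint : ∀ p, ∫ ω, Y p ω ∂ℙ = q p := by
    intro p
    have hqp : q p = (ℙ {ω | a < ‖x p.1 p.2 ω‖}).toReal := rfl
    rw [hqp, ← measureReal_def, ← integral_indicator_one (hqms p)]
    apply integral_congr_ae
    filter_upwards with ω
    by_cases h : a < ‖x p.1 p.2 ω‖ <;>
      simp [hY, Set.indicator_apply, Set.mem_setOf_eq, h]
  have hYintg : ∀ p, Integrable (Y p) ℙ := fun p =>
    (integrable_const (1:ℝ)).mono' (hYmeas p).aestronglyMeasurable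
      (ae_of_all _ fun ω => by rcases hY01 p ω with h | h <;> rw [h] <;> norm_num)
  have hexpY : ∀ p, (fun ω => Real.exp (1 * Y p ω))
      = fun ω => 1 + (Real.exp 1 - 1) * Y p ω := by
    intro p
    funext ω
    rcases hY01 p ω with h | h <;> rw [h] <;> simp
  have hEexpY : ∀ p, Integrable (fun ω => Real.exp (1 * Y p ω)) ℙ := by
    intro p
    rw [hexpY p]
    exact (integrable_const 1).add ((hYintg p).const_mul _)
  have hmgfY : ∀ p, mgf (Y p) ℙ 1 ≤ Real.exp (2 * q p) := by
    intro p
    have hval : mgf (Y p) ℙ 1 = 1 + (Real.exp 1 - 1) * q p := by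
      unfold mgf
      rw [hexpY p, integral_add (integrable_const 1) ((hYintg p).const_mul _),
        integral_const, integral_const_mul, hYint p]
      simp
    rw [hval]
    have he : Real.exp 1 ≤ 3 :=
      le_of_lt (lt_of_lt_of_le Real.exp_one_lt_d9 (by norm_num))
    have h2 : 1 + 2 * q p ≤ Real.exp (2 * q p) := by
      have := Real.add_one_le_exp (2 * q p); linarith
    nlinarith [hqnonneg p]
  -- Chernoff
  have hSint : Integrable (fun ω => Real.exp (1 * (∑ p ∈ s, Y p) ω)) ℙ :=
    hYindep.integrable_exp_mul_sum hYmeas (fun p _ => hEexpY p)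
  have hchern := measure_ge_le_exp_mul_mgf (μ := ℙ) (X := ∑ p ∈ s, Y p) a one_pos.le hSint
  rw [hYindep.mgf_sum hYmeas s] at hchern
  have hprod : ∏ p ∈ s, mgf (Y p) ℙ 1 ≤ Real.exp (∑ p ∈ s, 2 * q p) := by
    rw [Real.exp_sum]
    exact Finset.prod_le_prod (fun p _ => mgf_nonneg) (fun p _ => hmgfY p)
  -- bound on ∑ q
  have hb32 : (0:ℝ) < (n:ℝ) ^ ((3:ℝ)/2) := Real.rpow_pos_of_pos hnpos _
  have ha2 : a ^ 2 = (n:ℝ) ^ ((3:ℝ)/2) := by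
    rw [ha, ← Real.rpow_natCast ((n:ℝ) ^ ((3:ℝ)/4)) 2, ← Real.rpow_mul hnpos.le]
    norm_num
  have hsq : Real.sqrt n ≤ a := by
    rw [Real.sqrt_eq_rpow, ha]
    exact Real.rpow_le_rpow_of_exponent_le hn1' (by norm_num)
  have hgint : ∀ i j, Integrable
      (fun ω => ‖x i j ω‖ ^ 2 * (if 1 * Real.sqrt n < ‖x i j ω‖ then (1:ℝ) else 0)) ℙ := by
    intro i j
    refine (hint2 i j).mono' ?_ (ae_of_all _ fun ω => ?_)
    · exact (((hmeas i j).norm.pow_const 2).mul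
        (Measurable.ite (measurableSet_lt measurable_const (hmeas i j).norm)
          measurable_const measurable_const)).aestronglyMeasurable
    · rw [Real.norm_eq_abs, abs_mul, abs_of_nonneg (pow_nonneg (norm_nonneg _) 2)]
      have hb1 : |if 1 * Real.sqrt n < ‖x i j ω‖ then (1:ℝ) else 0| ≤ 1 := by
        split_ifs <;> simp
      exact mul_le_of_le_one_right (by positivity) hb1
  have hkey : ∀ p ∈ s, q p * (n:ℝ) ^ ((3:ℝ)/2)
      ≤ ∫ ω, ‖x p.1 p.2 ω‖ ^ 2 *
          (if 1 * Real.sqrt n < ‖x p.1 p.2 ω‖ then (1:ℝ) else 0) ∂ℙ := by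
    intro p _
    have hpt : ∀ ω, (n:ℝ) ^ ((3:ℝ)/2) * Y p ω
        ≤ ‖x p.1 p.2 ω‖ ^ 2 * (if 1 * Real.sqrt n < ‖x p.1 p.2 ω‖ then (1:ℝ) else 0) := by
      intro ω
      by_cases h : a < ‖x p.1 p.2 ω‖
      · have h2 : 1 * Real.sqrt n < ‖x p.1 p.2 ω‖ := by
          rw [one_mul]; exact lt_of_le_of_lt hsq h
        have : (n:ℝ) ^ ((3:ℝ)/2) ≤ ‖x p.1 p.2 ω‖ ^ 2 := by
          rw [← ha2]
          exact pow_le_pow_left₀ hapos.le h.le 2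
        simp only [hY, h, if_pos, h2, mul_one, if_true]
        simpa using this
      · simp only [hY, h, if_false, mul_zero]
        positivity
    calc q p * (n:ℝ) ^ ((3:ℝ)/2) = ∫ ω, (n:ℝ) ^ ((3:ℝ)/2) * Y p ω ∂ℙ := by
          rw [integral_const_mul, hYint p]; ring
      _ ≤ _ := integral_mono ((hYintg p).const_mul _) (hgint p.1 p.2) hpt
  have hLbound : ∑ i ∈ range n, ∑ j ∈ range n,
      (∫ ω, ‖x i j ω‖ ^ 2 * (if 1 * Real.sqrt n < ‖x i j ω‖ then (1:ℝ) else 0) ∂ℙ)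
      ≤ (n:ℝ) ^ 2 * (1/4) := by
    have hd := hN0 n hn0
    rw [Real.dist_eq, sub_zero] at hd
    have hd' := lt_of_abs_lt hd
    have hne : ((n:ℝ) ^ 2) ≠ 0 := by positivity
    have : (∑ i ∈ range n, ∑ j ∈ range n,
        ∫ ω, ‖x i j ω‖ ^ 2 * (if 1 * Real.sqrt n < ‖x i j ω‖ then (1:ℝ) else 0) ∂ℙ)
        = (n:ℝ) ^ 2 * ((1 / (n:ℝ) ^ 2) * ∑ i ∈ range n, ∑ j ∈ range n,
          ∫ ω, ‖x i j ω‖ ^ 2 * (if 1 * Real.sqrt n < ‖x i j ω‖ then (1:ℝ) else 0) ∂ℙ) := by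
      field_simp
    rw [this]
    exact mul_le_mul_of_nonneg_left hd'.le (by positivity)
  have hT : ∑ p ∈ s, q p ≤ a / 4 := by
    have h1 : (∑ p ∈ s, q p) * (n:ℝ) ^ ((3:ℝ)/2)
        ≤ ∑ p ∈ s, ∫ ω, ‖x p.1 p.2 ω‖ ^ 2 *
            (if 1 * Real.sqrt n < ‖x p.1 p.2 ω‖ then (1:ℝ) else 0) ∂ℙ := by
      rw [Finset.sum_mul]
      exact Finset.sum_le_sum hkey
    have h2 : (∑ p ∈ s, ∫ ω, ‖x p.1 p.2 ω‖ ^ 2 *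
            (if 1 * Real.sqrt n < ‖x p.1 p.2 ω‖ then (1:ℝ) else 0) ∂ℙ)
        ≤ (n:ℝ) ^ 2 * (1/4) := by
      rw [hs, Finset.sum_product]
      exact hLbound
    have h3 : (n:ℝ) ^ 2 * (1/4) ≤ a / 4 * (n:ℝ) ^ ((3:ℝ)/2) := by
      have hpow : (n:ℝ) ^ 2 ≤ a * (n:ℝ) ^ ((3:ℝ)/2) := by
        rw [ha, ← Real.rpow_add hnpos, ← Real.rpow_natCast (n:ℝ) 2]
        exact Real.rpow_le_rpow_of_exponent_le hn1' (by norm_num)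
      linarith
    exact (mul_le_mul_iff_left₀ hb32).mp (h1.trans (h2.trans h3))
  -- assemble
  have hsetY : ∀ ω, ((Finset.filter (fun p => a < ‖x p.1 p.2 ω‖) s).card : ℝ)
      = (∑ p ∈ s, Y p) ω := by
    intro ω
    rw [Finset.sum_apply, Finset.card_filter]
    push_cast
    simp [hY]
  have hmono : ℙ {ω | a < (((range n ×ˢ range n).filter
        (fun p => a < ‖x p.1 p.2 ω‖)).card : ℝ)}
      ≤ ℙ {ω | a ≤ (∑ p ∈ s, Y p) ω} := by
    refine measure_mono fun ω hω => ?_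
    have hω' : a < (((s.filter (fun p => a < ‖x p.1 p.2 ω‖)).card : ℕ) : ℝ) := hω
    rw [hsetY ω] at hω'
    exact hω'.le
  have hfin : (ℙ {ω | a ≤ (∑ p ∈ s, Y p) ω}).toReal
      ≤ 2 * Real.exp (-(1/2) * a) := by
    refine hchern.trans ?_
    have step1 : Real.exp (-1 * a) * ∏ p ∈ s, mgf (Y p) ℙ 1
        ≤ Real.exp (-1 * a) * Real.exp (∑ p ∈ s, 2 * q p) :=
      mul_le_mul_of_nonneg_left hprod (Real.exp_pos _).le
    have step2 : Real.exp (-1 * a) * Real.exp (∑ p ∈ s, 2 * q p)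
        ≤ Real.exp (-(1/2) * a) := by
      rw [← Real.exp_add]
      apply Real.exp_le_exp.mpr
      have : ∑ p ∈ s, 2 * q p = 2 * ∑ p ∈ s, q p := by rw [Finset.mul_sum]
      rw [this]
      linarith [hT]
    have step3 : Real.exp (-(1/2) * a) ≤ 2 * Real.exp (-(1/2) * a) := by
      linarith [(Real.exp_pos (-(1/2) * a)).le]
    linarith
  calc ℙ {ω | a < (((range n ×ˢ range n).filter
        (fun p => a < ‖x p.1 p.2 ω‖)).card : ℝ)}
      ≤ ℙ {ω | a ≤ (∑ p ∈ s, Y p) ω} := hmono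
    _ ≤ ENNReal.ofReal (2 * Real.exp (-(1/2) * a)) :=
        (ENNReal.le_ofReal_iff_toReal_le (measure_ne_top _ _) (by positivity)).mpr hfin
end

section
/- Let x_{ij}, 1 ≤ i,j ≤ n, be independent complex random variables with mean 0 and unit variance, bounded by n^{3/4} after truncation, and define S_{n2} = (1/n²) Σ_{i,j} |x_{ij}|² I(|x_{ij}| ≤ n^{3/4}). Then E[(S_{n2} − E S_{n2})^6] = O(n^{−3/2}). -/
open MeasureTheory ProbabilityTheory Filter Finset


set_option maxHeartbeats 1000000 in
lemma aux_moment6 {Ω : Type*} [MeasureSpace Ω] [IsProbabilityMeasure (ℙ : Measure Ω)]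
    {ι : Type*} (y : ι → Ω → ℝ) (hmeas : ∀ i, Measurable (y i))
    (hindep : iIndepFun y ℙ)
    (M v : ℝ) (hM0 : 0 ≤ M) (hv0 : 0 ≤ v)
    (hbd : ∀ i ω, |y i ω| ≤ M)
    (hmean : ∀ i, ∫ ω, y i ω ∂ℙ = 0)
    (hv : ∀ i, ∫ ω, (y i ω) ^ 2 ∂ℙ ≤ v)
    (s : Finset ι) :
    (∫ ω, (∑ i ∈ s, y i ω) ∂ℙ = 0) ∧
    (∫ ω, (∑ i ∈ s, y i ω) ^ 2 ∂ℙ ≤ s.card * v) ∧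
    (|∫ ω, (∑ i ∈ s, y i ω) ^ 3 ∂ℙ| ≤ s.card * (M * v)) ∧
    (∫ ω, (∑ i ∈ s, y i ω) ^ 4 ∂ℙ ≤ 3 * s.card ^ 2 * v ^ 2 + s.card * (M ^ 2 * v)) ∧
    (∫ ω, (∑ i ∈ s, y i ω) ^ 6 ∂ℙ ≤
      15 * s.card ^ 3 * v ^ 3 + 25 * s.card ^ 2 * (M ^ 2 * v ^ 2) + s.card * (M ^ 4 * v)) := by
  have intbd : ∀ (f : Ω → ℝ) (C : ℝ), Measurable f → (∀ ω, |f ω| ≤ C) → Integrable f ℙ :=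
    fun f C hf hC => (integrable_const C).mono' hf.aestronglyMeasurable
      (Eventually.of_forall (by simpa [Real.norm_eq_abs] using hC))
  induction s using Finset.cons_induction with
  | empty => simp
  | cons a s has ih =>
    obtain ⟨ih1, ih2, ih3, ih4, ih6⟩ := ih
    set T : Ω → ℝ := fun ω => ∑ i ∈ s, y i ω with hT
    have Tmeas : Measurable T := Finset.measurable_sum s (fun i _ => hmeas i)
    have Tbd : ∀ ω, |T ω| ≤ s.card * M := by
      intro ω
      calc |T ω| ≤ ∑ i ∈ s, |y i ω| := Finset.abs_sum_le_sum_abs _ _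
      _ ≤ s.card • M := Finset.sum_le_card_nsmul s _ M (fun i _ => hbd i ω)
      _ = s.card * M := by simp [nsmul_eq_mul]
    have indep : IndepFun T (y a) ℙ := by
      have h := hindep.indepFun_finsetSum_of_notMem hmeas has
      have e : (∑ j ∈ s, y j) = T := by funext ω; simp [hT]
      rwa [e] at h
    have key : ∀ p q : ℕ, ∫ ω, y a ω ^ q * T ω ^ p ∂ℙ
        = (∫ ω, y a ω ^ q ∂ℙ) * (∫ ω, T ω ^ p ∂ℙ) := by
      intro p q
      have h2 : IndepFun (fun ω => y a ω ^ q) (fun ω => T ω ^ p) ℙ :=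
        (indep.symm).comp (measurable_id.pow_const q) (measurable_id.pow_const p)
      exact h2.integral_fun_mul_eq_mul_integral ((hmeas a).pow_const q).aestronglyMeasurable
        (Tmeas.pow_const p).aestronglyMeasurable
    have Iprod : ∀ q p : ℕ, Integrable (fun ω => y a ω ^ q * T ω ^ p) ℙ := by
      intro q p
      refine intbd _ (M ^ q * (s.card * M) ^ p) (((hmeas a).pow_const q).mul (Tmeas.pow_const p)) ?_
      intro ω
      rw [abs_mul, abs_pow, abs_pow]
      exact mul_le_mul (pow_le_pow_left₀ (abs_nonneg _) (hbd a ω) q)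
        (pow_le_pow_left₀ (abs_nonneg _) (Tbd ω) p) (by positivity) (by positivity)
    have hmom : ∀ m : ℕ, ∫ ω, (y a ω + T ω) ^ m ∂ℙ
        = ∑ k ∈ range (m + 1),
            (∫ ω, y a ω ^ k ∂ℙ) * (∫ ω, T ω ^ (m - k) ∂ℙ) * (m.choose k) := by
      intro m
      calc ∫ ω, (y a ω + T ω) ^ m ∂ℙ
          = ∫ ω, ∑ k ∈ range (m + 1), y a ω ^ k * T ω ^ (m - k) * (m.choose k) ∂ℙ := by
            congr 1; funext ω; exact add_pow _ _ m
        _ = ∑ k ∈ range (m + 1), ∫ ω, y a ω ^ k * T ω ^ (m - k) * (m.choose k) ∂ℙ :=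
            integral_finset_sum _ (fun k _ => (Iprod k (m - k)).mul_const _)
        _ = ∑ k ∈ range (m + 1),
            (∫ ω, y a ω ^ k ∂ℙ) * (∫ ω, T ω ^ (m - k) ∂ℙ) * (m.choose k) := by
            refine Finset.sum_congr rfl (fun k _ => ?_)
            rw [integral_mul_const, key]
    -- basic moment values
    have J0 : ∫ ω, y a ω ^ 0 ∂ℙ = 1 := by simp
    have I0 : ∫ ω, T ω ^ 0 ∂ℙ = 1 := by simp
    have J1 : ∫ ω, y a ω ∂ℙ = 0 := hmean a
    have I1 : ∫ ω, T ω ∂ℙ = 0 := ih1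
    have J2 : ∫ ω, y a ω ^ 2 ∂ℙ ≤ v := hv a
    have J2n : 0 ≤ ∫ ω, y a ω ^ 2 ∂ℙ := integral_nonneg (fun ω => by positivity)
    have Jgen : ∀ q : ℕ, ∫ ω, |y a ω| ^ (q + 2) ∂ℙ ≤ M ^ q * v := by
      intro q
      calc ∫ ω, |y a ω| ^ (q + 2) ∂ℙ ≤ ∫ ω, M ^ q * y a ω ^ 2 ∂ℙ := by
            refine integral_mono (intbd _ (M ^ (q + 2)) ((hmeas a).abs.pow_const _) ?_)
              ((intbd _ (M ^ 2) ((hmeas a).pow_const 2) ?_).const_mul _) ?_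
            · intro ω
              rw [abs_pow, abs_abs]
              exact pow_le_pow_left₀ (abs_nonneg _) (hbd a ω) _
            · intro ω
              rw [abs_pow]
              exact pow_le_pow_left₀ (abs_nonneg _) (hbd a ω) _
            · intro ω
              show |y a ω| ^ (q + 2) ≤ M ^ q * y a ω ^ 2
              have e2 : |y a ω| ^ (q + 2) = |y a ω| ^ q * y a ω ^ 2 := by
                rw [pow_add, sq_abs]
              rw [e2]
              exact mul_le_mul_of_nonneg_right (pow_le_pow_left₀ (abs_nonneg _) (hbd a ω) q)
                (by positivity)
        _ = M ^ q * ∫ ω, y a ω ^ 2 ∂ℙ := integral_const_mul _ _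
        _ ≤ M ^ q * v := mul_le_mul_of_nonneg_left J2 (by positivity)
    have J3 : |∫ ω, y a ω ^ 3 ∂ℙ| ≤ M * v := by
      calc |∫ ω, y a ω ^ 3 ∂ℙ| ≤ ∫ ω, |y a ω ^ 3| ∂ℙ := by
            have := norm_integral_le_integral_norm (μ := ℙ) (f := fun ω => y a ω ^ 3)
            simpa only [Real.norm_eq_abs] using this
        _ = ∫ ω, |y a ω| ^ (1 + 2) ∂ℙ := by simp [abs_pow]
        _ ≤ M ^ 1 * v := Jgen 1
        _ = M * v := by ring
    have J4 : ∫ ω, y a ω ^ 4 ∂ℙ ≤ M ^ 2 * v := by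
      have e : ∀ ω, y a ω ^ 4 = |y a ω| ^ (2 + 2) := by
        intro ω
        rw [show 2 + 2 = 4 from rfl, ← abs_pow,
          abs_of_nonneg (by positivity : (0:ℝ) ≤ y a ω ^ 4)]
      calc ∫ ω, y a ω ^ 4 ∂ℙ = ∫ ω, |y a ω| ^ (2 + 2) ∂ℙ := by simp_rw [e]
        _ ≤ M ^ 2 * v := Jgen 2
    have J6 : ∫ ω, y a ω ^ 6 ∂ℙ ≤ M ^ 4 * v := by
      have e : ∀ ω, y a ω ^ 6 = |y a ω| ^ (4 + 2) := by
        intro ω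
        rw [show 4 + 2 = 6 from rfl, ← abs_pow,
          abs_of_nonneg (by positivity : (0:ℝ) ≤ y a ω ^ 6)]
      calc ∫ ω, y a ω ^ 6 ∂ℙ = ∫ ω, |y a ω| ^ (4 + 2) ∂ℙ := by simp_rw [e]
        _ ≤ M ^ 4 * v := Jgen 4
    have I2n : 0 ≤ ∫ ω, T ω ^ 2 ∂ℙ := integral_nonneg (fun ω => by positivity)
    have I4n : 0 ≤ ∫ ω, T ω ^ 4 ∂ℙ := integral_nonneg (fun ω => by positivity)
    have ih2' : ∫ ω, T ω ^ 2 ∂ℙ ≤ s.card * v := ih2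
    have ih3' : |∫ ω, T ω ^ 3 ∂ℙ| ≤ s.card * (M * v) := ih3
    have ih4' : ∫ ω, T ω ^ 4 ∂ℙ ≤ 3 * s.card ^ 2 * v ^ 2 + s.card * (M ^ 2 * v) := ih4
    have ih6' : ∫ ω, T ω ^ 6 ∂ℙ ≤
        15 * s.card ^ 3 * v ^ 3 + 25 * s.card ^ 2 * (M ^ 2 * v ^ 2) + s.card * (M ^ 4 * v) := ih6
    have hsum : ∀ ω, ∑ i ∈ Finset.cons a s has, y i ω = y a ω + T ω := by
      intro ω; rw [Finset.sum_cons]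
    have hcard : ((Finset.cons a s has).card : ℝ) = (s.card : ℝ) + 1 := by
      rw [Finset.card_cons]; push_cast; ring
    have hKn : (0:ℝ) ≤ (s.card : ℝ) := by positivity
    simp_rw [hsum, hcard]
    set K : ℝ := (s.card : ℝ)
    refine ⟨?_, ?_, ?_, ?_, ?_⟩
    · have h := hmom 1
      simp [Finset.sum_range_succ, J0, I0, J1, I1] at h
      simpa using h
    · have h := hmom 2
      simp [Finset.sum_range_succ, J0, I0, J1, I1] at h
      rw [h]
      nlinarith [J2, ih2']
    · have h := hmom 3
      simp [Finset.sum_range_succ, J0, I0, J1, I1] at h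
      rw [h]
      calc |(∫ ω, T ω ^ 3 ∂ℙ) + ∫ ω, y a ω ^ 3 ∂ℙ|
          ≤ |∫ ω, T ω ^ 3 ∂ℙ| + |∫ ω, y a ω ^ 3 ∂ℙ| := abs_add_le _ _
        _ ≤ K * (M * v) + M * v := add_le_add ih3' J3
        _ = (K + 1) * (M * v) := by ring
    · have h := hmom 4
      simp [Finset.sum_range_succ, J0, I0, J1, I1, Nat.choose] at h
      rw [h]
      have hm : (∫ ω, y a ω ^ 2 ∂ℙ) * (∫ ω, T ω ^ 2 ∂ℙ) ≤ v * (K * v) :=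
        mul_le_mul J2 ih2' I2n hv0
      nlinarith [J4, ih4', hm, hKn, hv0, hM0, mul_nonneg hKn (mul_nonneg hv0 hv0),
        mul_nonneg (mul_nonneg hM0 hM0) hv0]
    · have h := hmom 6
      simp [Finset.sum_range_succ, J0, I0, J1, I1, Nat.choose] at h
      rw [h]
      have h24 : (∫ ω, y a ω ^ 2 ∂ℙ) * (∫ ω, T ω ^ 4 ∂ℙ)
          ≤ v * (3 * K ^ 2 * v ^ 2 + K * (M ^ 2 * v)) := mul_le_mul J2 ih4' I4n hv0
      have h33 : (∫ ω, y a ω ^ 3 ∂ℙ) * (∫ ω, T ω ^ 3 ∂ℙ) ≤ (M * v) * (K * (M * v)) := by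
        calc (∫ ω, y a ω ^ 3 ∂ℙ) * (∫ ω, T ω ^ 3 ∂ℙ)
            ≤ |(∫ ω, y a ω ^ 3 ∂ℙ) * (∫ ω, T ω ^ 3 ∂ℙ)| := le_abs_self _
          _ = |∫ ω, y a ω ^ 3 ∂ℙ| * |∫ ω, T ω ^ 3 ∂ℙ| := abs_mul _ _
          _ ≤ (M * v) * (K * (M * v)) :=
              mul_le_mul J3 ih3' (abs_nonneg _) (by positivity)
      have h42 : (∫ ω, y a ω ^ 4 ∂ℙ) * (∫ ω, T ω ^ 2 ∂ℙ) ≤ (M ^ 2 * v) * (K * v) :=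
        mul_le_mul J4 ih2' I2n (by positivity)
      have e1 : (0:ℝ) ≤ K * v ^ 3 := by positivity
      have e2 : (0:ℝ) ≤ v ^ 3 := by positivity
      have e3 : (0:ℝ) ≤ M ^ 2 * v ^ 2 := by positivity
      have e4 : (0:ℝ) ≤ K ^ 2 * v ^ 3 := by positivity
      have e5 : (0:ℝ) ≤ K * (M ^ 2 * v ^ 2) := by positivity
      nlinarith [J6, ih6', h24, h33, h42, e1, e2, e3, e4, e5]

set_option maxHeartbeats 1000000 in
/-- Sixth central moment bound: for `S_{n2} = n⁻² ∑_{i,j≤n} |x_{ij}|² I(|x_{ij}| ≤ n^{3/4})`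
built from independent complex entries with mean 0 and unit variance,
`E[(S_{n2} − E S_{n2})⁶] = O(n^{−3/2})`. -/
theorem stmt_8 {Ω : Type*} [MeasureSpace Ω] [IsProbabilityMeasure (ℙ : Measure Ω)]
    (x : ℕ → ℕ → Ω → ℂ)
    (hmeas : ∀ i j, Measurable (x i j))
    (hindep : iIndepFun (fun (p : ℕ × ℕ) => x p.1 p.2) ℙ)
    (hint : ∀ i j, Integrable (x i j) ℙ)
    (hmean : ∀ i j, ∫ ω, x i j ω ∂ℙ = 0)
    (hint2 : ∀ i j, Integrable (fun ω => ‖x i j ω‖ ^ 2) ℙ)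
    (hvar : ∀ i j, ∫ ω, ‖x i j ω‖ ^ 2 ∂ℙ = 1)
    (S : ℕ → Ω → ℝ)
    (hS : ∀ n ω, S n ω = (1 / (n : ℝ) ^ 2) * ∑ i ∈ range n, ∑ j ∈ range n,
        ‖x i j ω‖ ^ 2 * (if ‖x i j ω‖ ≤ (n : ℝ) ^ ((3:ℝ)/4) then (1:ℝ) else 0)) :
    ∃ C : ℝ, ∀ n : ℕ, 1 ≤ n →
      ∫ ω, (S n ω - ∫ ω', S n ω' ∂ℙ) ^ 6 ∂ℙ ≤ C * (n : ℝ) ^ (-(3:ℝ)/2) := by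
  refine ⟨50, fun n hn => ?_⟩
  have intbd : ∀ (f : Ω → ℝ) (C : ℝ), Measurable f → (∀ ω, |f ω| ≤ C) → Integrable f ℙ :=
    fun f C hf hC => (integrable_const C).mono' hf.aestronglyMeasurable
      (Eventually.of_forall (by simpa [Real.norm_eq_abs] using hC))
  have ht1 : (1:ℝ) ≤ (n:ℝ) := by exact_mod_cast hn
  have ht0 : (0:ℝ) < (n:ℝ) := by linarith
  set t : ℝ := (n:ℝ) with htdef
  set b : ℝ := t ^ ((3:ℝ)/4) with hb
  have hb1 : 1 ≤ b := Real.one_le_rpow ht1 (by norm_num)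
  have hb0 : (0:ℝ) ≤ b := by linarith
  have hb21 : (1:ℝ) ≤ b ^ 2 := one_le_pow₀ hb1
  have hb20 : (0:ℝ) ≤ b ^ 2 := by positivity
  -- the truncated variables
  set z : ℕ × ℕ → Ω → ℝ :=
    fun p ω => ‖x p.1 p.2 ω‖ ^ 2 * (if ‖x p.1 p.2 ω‖ ≤ b then (1:ℝ) else 0) with hzdef
  have zmeas : ∀ p, Measurable (z p) := by
    intro p
    exact ((hmeas p.1 p.2).norm.pow_const 2).mul
      (Measurable.ite (measurableSet_le (hmeas p.1 p.2).norm measurable_const)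
        measurable_const measurable_const)
  have znn : ∀ p ω, 0 ≤ z p ω := by
    intro p ω
    simp only [hzdef]
    split <;> simp
  have zle : ∀ p ω, z p ω ≤ ‖x p.1 p.2 ω‖ ^ 2 := by
    intro p ω
    simp only [hzdef]
    split
    · simp
    · simp
  have zbd : ∀ p ω, z p ω ≤ b ^ 2 := by
    intro p ω
    simp only [hzdef]
    split
    · rename_i h
      simpa using pow_le_pow_left₀ (norm_nonneg _) h 2
    · simpa using hb20
  have zint : ∀ p, Integrable (z p) ℙ := by
    intro p
    refine (hint2 p.1 p.2).mono' (zmeas p).aestronglyMeasurable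
      (Eventually.of_forall (fun ω => ?_))
    rw [Real.norm_eq_abs, abs_of_nonneg (znn p ω)]
    exact zle p ω
  set m : ℕ × ℕ → ℝ := fun p => ∫ ω, z p ω ∂ℙ with hmdef
  have mnn : ∀ p, 0 ≤ m p := fun p => integral_nonneg (znn p)
  have mle : ∀ p, m p ≤ 1 := by
    intro p
    have h := integral_mono (zint p) (hint2 p.1 p.2) (zle p)
    rwa [hvar p.1 p.2] at h
  set y : ℕ × ℕ → Ω → ℝ := fun p ω => z p ω - m p with hydef
  have ymeas : ∀ p, Measurable (y p) := fun p => (zmeas p).sub measurable_const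
  have yindep : iIndepFun y ℙ := by
    have h := hindep.comp
      (fun p : ℕ × ℕ => fun w : ℂ => ‖w‖ ^ 2 * (if ‖w‖ ≤ b then (1:ℝ) else 0) - m p)
      (fun p => ((measurable_norm.pow_const 2).mul
        (Measurable.ite (measurableSet_le measurable_norm measurable_const)
          measurable_const measurable_const)).sub measurable_const)
    exact h
  have ybd : ∀ p ω, |y p ω| ≤ b ^ 2 := by
    intro p ω
    rw [abs_le]
    constructor
    · have h1 := znn p ω; have h2 := mle p; simp only [hydef]; linarith
    · have h1 := zbd p ω; have h2 := mnn p; simp only [hydef]; linarith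
  have ymean : ∀ p, ∫ ω, y p ω ∂ℙ = 0 := by
    intro p
    simp only [hydef]
    rw [integral_sub (zint p) (integrable_const _)]
    simp [hmdef]
  have z2int : ∀ p, Integrable (fun ω => z p ω ^ 2) ℙ := by
    intro p
    refine intbd _ (b ^ 2 * b ^ 2) ((zmeas p).pow_const 2) (fun ω => ?_)
    rw [abs_of_nonneg (by positivity)]
    calc z p ω ^ 2 = z p ω * z p ω := by ring
      _ ≤ b ^ 2 * b ^ 2 := mul_le_mul (zbd p ω) (zbd p ω) (znn p ω) hb20
  have z2le : ∀ p, ∫ ω, z p ω ^ 2 ∂ℙ ≤ b ^ 2 := by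
    intro p
    calc ∫ ω, z p ω ^ 2 ∂ℙ ≤ ∫ ω, b ^ 2 * z p ω ∂ℙ := by
          refine integral_mono (z2int p) ((zint p).const_mul _) (fun ω => ?_)
          calc z p ω ^ 2 = z p ω * z p ω := by ring
            _ ≤ b ^ 2 * z p ω := mul_le_mul_of_nonneg_right (zbd p ω) (znn p ω)
      _ = b ^ 2 * m p := integral_const_mul _ _
      _ ≤ b ^ 2 * 1 := mul_le_mul_of_nonneg_left (mle p) hb20
      _ = b ^ 2 := mul_one _
  have yvar : ∀ p, ∫ ω, y p ω ^ 2 ∂ℙ ≤ b ^ 2 := by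
    intro p
    have expand : ∀ ω, y p ω ^ 2 = z p ω ^ 2 - (2 * m p) * z p ω + m p ^ 2 := by
      intro ω; simp only [hydef]; ring
    calc ∫ ω, y p ω ^ 2 ∂ℙ
        = ∫ ω, (z p ω ^ 2 - (2 * m p) * z p ω + m p ^ 2) ∂ℙ := by
          exact integral_congr_ae (Eventually.of_forall (fun ω => expand ω))
      _ = (∫ ω, (z p ω ^ 2 - (2 * m p) * z p ω) ∂ℙ) + ∫ ω, (m p ^ 2 : ℝ) ∂ℙ :=
          integral_add ((z2int p).sub ((zint p).const_mul _)) (integrable_const _)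
      _ = ((∫ ω, z p ω ^ 2 ∂ℙ) - ∫ ω, (2 * m p) * z p ω ∂ℙ) + m p ^ 2 := by
          rw [integral_sub (z2int p) ((zint p).const_mul _)]
          simp
      _ = (∫ ω, z p ω ^ 2 ∂ℙ) - 2 * m p * m p + m p ^ 2 := by
          rw [integral_const_mul]
      _ = (∫ ω, z p ω ^ 2 ∂ℙ) - m p ^ 2 := by ring
      _ ≤ b ^ 2 := by
          have := z2le p
          have := sq_nonneg (m p)
          linarith
  -- apply the moment lemma
  set s : Finset (ℕ × ℕ) := range n ×ˢ range n with hsdef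
  obtain ⟨-, -, -, -, h6⟩ := aux_moment6 y ymeas yindep (b ^ 2) (b ^ 2) hb20 hb20 ybd ymean yvar s
  have hN : ((s.card : ℝ)) = t ^ 2 := by
    rw [hsdef, Finset.card_product, Finset.card_range]
    push_cast
    ring
  rw [hN] at h6
  -- rewrite S in terms of y
  have hSsum : ∀ ω, S n ω = (1 / t ^ 2) * ∑ p ∈ s, z p ω := by
    intro ω
    rw [hS n ω, hsdef, Finset.sum_product]
  have hES : (∫ ω', S n ω' ∂ℙ) = (1 / t ^ 2) * ∑ p ∈ s, m p := by
    simp_rw [hSsum]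
    rw [integral_const_mul, integral_finset_sum s (fun p _ => zint p)]
  have hdiff : ∀ ω, S n ω - (∫ ω', S n ω' ∂ℙ) = (1 / t ^ 2) * ∑ p ∈ s, y p ω := by
    intro ω
    rw [hSsum, hES, ← mul_sub, ← Finset.sum_sub_distrib]
  calc ∫ ω, (S n ω - ∫ ω', S n ω' ∂ℙ) ^ 6 ∂ℙ
      = (1 / t ^ 2) ^ 6 * ∫ ω, (∑ p ∈ s, y p ω) ^ 6 ∂ℙ := by
        simp_rw [hdiff, mul_pow]
        rw [integral_const_mul]
    _ ≤ (1 / t ^ 2) ^ 6 * (15 * (t ^ 2) ^ 3 * (b ^ 2) ^ 3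
          + 25 * (t ^ 2) ^ 2 * ((b ^ 2) ^ 2 * (b ^ 2) ^ 2)
          + t ^ 2 * ((b ^ 2) ^ 4 * b ^ 2)) := by
        exact mul_le_mul_of_nonneg_left h6 (by positivity)
    _ ≤ 50 * t ^ (-(3:ℝ)/2) := by
        have hv32 : b ^ 2 = t ^ ((3:ℝ)/2) := by
          rw [hb, ← Real.rpow_natCast (t ^ ((3:ℝ)/4)) 2, ← Real.rpow_mul ht0.le]
          norm_num
        have hrp : ∀ (e : ℝ) (k : ℕ), (t ^ e) ^ k = t ^ (e * k) := by
          intro e k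
          rw [← Real.rpow_natCast (t ^ e) k, ← Real.rpow_mul ht0.le]
        have ht2 : t ^ (2:ℕ) = t ^ ((2:ℝ)) := by
          rw [← Real.rpow_natCast t 2]; norm_num
        have hmulr : ∀ e f : ℝ, t ^ e * t ^ f = t ^ (e + f) := fun e f =>
          (Real.rpow_add ht0 e f).symm
        have e6 : (1 / t ^ 2) ^ 6 = t ^ (-(12:ℝ)) := by
          rw [one_div, ht2, ← Real.rpow_neg ht0.le, hrp]
          norm_num
        rw [hv32, e6, ht2, hrp, hrp, hrp, hrp, hrp]
        norm_num
        have D : t ^ (-12:ℝ) * (15 * t ^ (6:ℝ) * t ^ ((9:ℝ)/2)) = 15 * t ^ (-(3/2) : ℝ) := by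
          rw [mul_assoc (15:ℝ), hmulr, mul_left_comm, hmulr]
          norm_num
        have E : t ^ (-12:ℝ) * (25 * t ^ (4:ℝ) * (t ^ (3:ℝ) * t ^ (3:ℝ)))
            = 25 * t ^ (-(2:ℝ)) := by
          rw [hmulr, mul_assoc (25:ℝ), hmulr, mul_left_comm, hmulr]
          norm_num
        have F : t ^ (-12:ℝ) * (t ^ (2:ℕ) * (t ^ (6:ℝ) * t ^ ((3:ℝ)/2)))
            = t ^ (-(5/2) : ℝ) := by
          rw [ht2, hmulr, hmulr, hmulr]
          norm_num
        rw [mul_add, mul_add]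
        norm_num at D E F
        rw [D, E, F]
        have u1 : t ^ (-(2:ℝ)) ≤ t ^ (-(3/2) : ℝ) :=
          Real.rpow_le_rpow_of_exponent_le ht1 (by norm_num)
        have u2 : t ^ (-(5/2) : ℝ) ≤ t ^ (-(3/2) : ℝ) :=
          Real.rpow_le_rpow_of_exponent_le ht1 (by norm_num)
        have u3 : (0:ℝ) ≤ t ^ (-(3/2) : ℝ) := Real.rpow_nonneg ht0.le _
        have u4 : (t ^ 2)⁻¹ = t ^ (-(2:ℝ)) := by rw [Real.rpow_neg ht0.le]; norm_num
        linarith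
end

section
/- Consider the cubic equation Δ³ + 2Δ² + ((α + 1 − |z|²)/α)Δ + 1/α = 0 in Δ, for α in the upper half plane and fixed z ∈ ℂ. Exactly one of the three analytic branches of solutions can be the Stieltjes transform of a probability measure on [0,∞); in particular, if Δ(α) is a branch that is such a Stieltjes transform, then as α → −∞ along the real axis, αΔ(α) → −1, and the product of the three branches equals −1/α while their sum equals −2. -/
open MeasureTheory Filter Complex

/-- A measure `μ` on `[0,∞)` and a function `m` so that `m` is the Stieltjes transform
of `μ` (away from `[0,∞)`). -/
def IsStieltjesTransformOfProbOnHalfLine (m : ℂ → ℂ) : Prop :=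
  ∃ μ : Measure ℝ, IsProbabilityMeasure μ ∧ μ (Set.Iio 0) = 0 ∧
    ∀ α : ℂ, (0 < α.im ∨ (α.im = 0 ∧ α.re < 0)) → m α = ∫ x : ℝ, ((x : ℂ) - α)⁻¹ ∂μ

lemma inv_atBot_zero : Tendsto (fun r : ℝ => r⁻¹) atBot (nhds 0) := by
  have := (tendsto_inv_atTop_zero.comp tendsto_neg_atBot_atTop (α := ℝ)).neg
  simpa [Function.comp, inv_neg] using this

lemma real_ratio_tendsto (x : ℝ) (hx : 0 ≤ x) :
    Tendsto (fun r : ℝ => r * (x - r)⁻¹) atBot (nhds (-1)) := by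
  have h1 : Tendsto (fun r : ℝ => x * r⁻¹ - 1) atBot (nhds (-1)) := by
    have := (inv_atBot_zero.const_mul x).sub_const 1
    simpa using this
  have h2 : Tendsto (fun r : ℝ => (x * r⁻¹ - 1)⁻¹) atBot (nhds ((-1:ℝ))⁻¹) :=
    h1.inv₀ (by norm_num)
  rw [show ((-1:ℝ))⁻¹ = -1 by norm_num] at h2
  apply h2.congr'
  filter_upwards [eventually_lt_atBot (0 : ℝ)] with r hr
  have hr0 : r ≠ 0 := hr.ne
  have hxr : x - r ≠ 0 := by nlinarith
  field_simp

lemma stieltjes_mul_tendsto (m : ℂ → ℂ)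
    (hm : IsStieltjesTransformOfProbOnHalfLine m) :
    Tendsto (fun r : ℝ => (r : ℂ) * m r) atBot (nhds (-1)) := by
  obtain ⟨μ, hμ, hI, hrep⟩ := hm
  have hae : ∀ᵐ x ∂μ, 0 ≤ x := by
    rw [ae_iff]
    convert hI using 2
    ext x
    simp [Set.Iio]
  have key : Tendsto (fun r : ℝ => ∫ x : ℝ, (r : ℂ) * ((x : ℂ) - r)⁻¹ ∂μ) atBot
      (nhds (∫ _ : ℝ, (-1 : ℂ) ∂μ)) := by
    apply tendsto_integral_filter_of_dominated_convergence (fun _ => (1 : ℝ))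
    · filter_upwards with r
      exact (measurable_const.mul
        ((Complex.measurable_ofReal.sub measurable_const).inv)).aestronglyMeasurable
    · filter_upwards [eventually_lt_atBot (0 : ℝ)] with r hr
      filter_upwards [hae] with x hx
      have hxr : (0 : ℝ) < x - r := by linarith
      have hc : ((x : ℂ) - (r : ℂ)) = ((x - r : ℝ) : ℂ) := by push_cast; ring
      rw [hc, norm_mul, norm_inv, Complex.norm_real, Complex.norm_real,
        Real.norm_eq_abs, Real.norm_eq_abs, abs_of_neg hr, abs_of_pos hxr]
      rw [← div_eq_mul_inv, div_le_one hxr]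
      linarith
    · exact integrable_const 1
    · filter_upwards [hae] with x hx
      have h := (Complex.continuous_ofReal.tendsto _).comp (real_ratio_tendsto x hx)
      have h' : Tendsto (fun r : ℝ => (r : ℂ) * ((x : ℂ) - r)⁻¹) atBot (nhds ((-1 : ℝ) : ℂ)) := by
        refine h.congr fun r => ?_
        simp only [Function.comp_apply]
        push_cast
        ring
      simpa using h'
  have hint : (∫ _ : ℝ, (-1 : ℂ) ∂μ) = -1 := by
    simp [integral_const, measure_univ]
  rw [hint] at key
  apply key.congr'
  filter_upwards [eventually_lt_atBot (0 : ℝ)] with r hr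
  rw [hrep r (Or.inr ⟨by simp, by simpa⟩)]
  simp only [← smul_eq_mul]
  exact integral_smul _ _

lemma stieltjes_tendsto_zero (m : ℂ → ℂ)
    (hm : IsStieltjesTransformOfProbOnHalfLine m) :
    Tendsto (fun r : ℝ => m r) atBot (nhds 0) := by
  have h1 := stieltjes_mul_tendsto m hm
  have h2 : Tendsto (fun r : ℝ => ((r : ℂ))⁻¹) atBot (nhds 0) := by
    have h := (Complex.continuous_ofReal.tendsto _).comp inv_atBot_zero
    have h' : Tendsto (fun r : ℝ => ((r : ℂ))⁻¹) atBot (nhds ((0 : ℝ) : ℂ)) := by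
      refine h.congr fun r => ?_
      simp only [Function.comp_apply]
      push_cast
      ring
    simpa using h'
  have h3 := h2.mul h1
  rw [show (0 : ℂ) * (-1) = 0 by ring] at h3
  apply h3.congr'
  filter_upwards [eventually_lt_atBot (0 : ℝ)] with r hr
  have hr0 : (r : ℂ) ≠ 0 := by exact_mod_cast hr.ne
  field_simp

lemma not_both_stieltjes (f g h : ℂ → ℂ)
    (hv : ∀ r : ℝ, r < 0 → f r * g r * h r = -1 / (r : ℂ) ∧ f r + g r + h r = -2)
    (hf : IsStieltjesTransformOfProbOnHalfLine f)
    (hg : IsStieltjesTransformOfProbOnHalfLine g) : False := by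
  have hrf := stieltjes_mul_tendsto f hf
  have hf0 := stieltjes_tendsto_zero f hf
  have hg0 := stieltjes_tendsto_zero g hg
  have hh : Tendsto (fun r : ℝ => h r) atBot (nhds (-2)) := by
    have h1 : Tendsto (fun r : ℝ => (-2 : ℂ) - f r - g r) atBot (nhds (-2)) := by
      have := (tendsto_const_nhds (x := (-2 : ℂ)) (f := atBot (α := ℝ))).sub hf0 |>.sub hg0
      simpa using this
    apply h1.congr'
    filter_upwards [eventually_lt_atBot (0 : ℝ)] with r hr
    have := (hv r hr).2
    linear_combination -this
  have hT : Tendsto (fun r : ℝ => (r : ℂ) * f r * (g r * h r)) atBot (nhds 0) := by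
    have := hrf.mul (hg0.mul hh)
    rw [show (-1 : ℂ) * (0 * -2) = 0 by ring] at this
    exact this
  have hT' : Tendsto (fun r : ℝ => (r : ℂ) * f r * (g r * h r)) atBot (nhds (-1)) := by
    apply tendsto_const_nhds.congr'
    filter_upwards [eventually_lt_atBot (0 : ℝ)] with r hr
    have h1 := (hv r hr).1
    have hr0 : (r : ℂ) ≠ 0 := by exact_mod_cast hr.ne
    have : (r : ℂ) * f r * (g r * h r) = (r : ℂ) * (f r * g r * h r) := by ring
    rw [this, h1]
    field_simp
  have := tendsto_nhds_unique hT hT'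
  norm_num at this

/-- For the cubic `Δ³ + 2Δ² + ((α+1−|z|²)/α)Δ + 1/α = 0`: if `Δ, m₂, m₃` are its three
branches of solutions (i.e. the cubic factors through them) and `Δ` is the branch that is
the Stieltjes transform of a probability measure on `[0,∞)`, then `αΔ(α) → −1` as
`α → −∞` along the real axis, the product of the three branches is `−1/α`, their sum is
`−2`, and neither `m₂` nor `m₃` is such a Stieltjes transform (so exactly one branch is). -/
theorem stmt_13 (z : ℂ) (Δ m₂ m₃ : ℂ → ℂ)
    (hfactor : ∀ α : ℂ, α ≠ 0 → ∀ w : ℂ,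
      w ^ 3 + 2 * w ^ 2 + ((α + 1 - ((‖z‖ : ℝ) : ℂ) ^ 2) / α) * w + 1 / α
        = (w - Δ α) * (w - m₂ α) * (w - m₃ α))
    (hdistinct : ∀ α : ℂ, 0 < α.im → Δ α ≠ m₂ α ∧ Δ α ≠ m₃ α ∧ m₂ α ≠ m₃ α)
    (hΔ : IsStieltjesTransformOfProbOnHalfLine Δ) :
    Tendsto (fun r : ℝ => (r : ℂ) * Δ r) atBot (nhds (-1)) ∧
    (∀ α : ℂ, α ≠ 0 → Δ α * m₂ α * m₃ α = -1 / α ∧ Δ α + m₂ α + m₃ α = -2) ∧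
    ¬ IsStieltjesTransformOfProbOnHalfLine m₂ ∧
    ¬ IsStieltjesTransformOfProbOnHalfLine m₃ := by
  have vieta : ∀ α : ℂ, α ≠ 0 → Δ α * m₂ α * m₃ α = -1 / α ∧ Δ α + m₂ α + m₃ α = -2 := by
    intro α hα
    have h0 := hfactor α hα 0
    have h1 := hfactor α hα 1
    have hm1 := hfactor α hα (-1)
    constructor
    · linear_combination h0
    · linear_combination ((1 : ℂ)/2) * h1 + ((1 : ℂ)/2) * hm1 - h0
  have hvr : ∀ r : ℝ, r < 0 →
      Δ r * m₂ r * m₃ r = -1 / (r : ℂ) ∧ Δ r + m₂ r + m₃ r = -2 := fun r hr =>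
    vieta r (by exact_mod_cast hr.ne)
  refine ⟨stieltjes_mul_tendsto Δ hΔ, vieta, ?_, ?_⟩
  · intro h2
    exact not_both_stieltjes Δ m₂ m₃ hvr hΔ h2
  · intro h3
    refine not_both_stieltjes Δ m₃ m₂ (fun r hr => ?_) hΔ h3
    obtain ⟨hp, hs⟩ := hvr r hr
    exact ⟨by linear_combination hp, by linear_combination hs⟩
end

section
/- Let λ_1,...,λ_n be complex numbers, z = s + it, ν_n(·, z) the empirical distribution of the values |λ_k − z|², and T ⊂ ℝ² any measurable set. Then for any ε > 0, ∫∫_T |∂/∂s ∫_0^{ε²} ln x ν_n(dx, z)| ds dt ≤ (2/n) Σ_{k=1}^n ∫∫_{|λ_k − z| ≤ ε} |λ_{kr} − s| / ((λ_{kr} − s)² + (λ_{ki} − t)²) ds dt = 8ε. -/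
section AuxPolarDisk
open MeasureTheory Set Real

theorem my_integrableOn_comp_polarCoord_symm (f : ℝ × ℝ → ℝ) :
    IntegrableOn (fun p => p.1 • f (polarCoord.symm p)) polarCoord.target ↔ Integrable f := by
  set B : ℝ × ℝ → ℝ × ℝ →L[ℝ] ℝ × ℝ := fun p =>
    LinearMap.toContinuousLinearMap (Matrix.toLin (Module.Basis.finTwoProd ℝ) (Module.Basis.finTwoProd ℝ)
      !![cos p.2, -p.1 * sin p.2; sin p.2, p.1 * cos p.2])
  have A : ∀ p ∈ polarCoord.target, HasFDerivAt polarCoord.symm (B p) p := fun p _ =>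
    hasFDerivAt_polarCoord_symm p
  have B_det : ∀ p, (B p).det = p.1 := by
    intro p
    conv_rhs => rw [← one_mul p.1, ← cos_sq_add_sin_sq p.2]
    simp only [B, neg_mul, LinearMap.det_toContinuousLinearMap, LinearMap.det_toLin,
      Matrix.det_fin_two_of, sub_neg_eq_add]
    ring
  have hinj : InjOn polarCoord.symm polarCoord.target := polarCoord.symm.injOn
  have himg : polarCoord.symm '' polarCoord.target = polarCoord.source :=
    polarCoord.symm_image_target_eq_source
  rw [← integrableOn_univ (f := f)]
  have h1 : IntegrableOn f univ ↔ IntegrableOn f polarCoord.source :=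
    ⟨fun h => h.congr_set_ae polarCoord_source_ae_eq_univ,
     fun h => h.congr_set_ae polarCoord_source_ae_eq_univ.symm⟩
  have A' : ∀ p ∈ polarCoord.target, HasFDerivWithinAt polarCoord.symm (B p) polarCoord.target p :=
    fun p hp => (A p hp).hasFDerivWithinAt
  rw [h1, ← himg,
    integrableOn_image_iff_integrableOn_abs_det_fderiv_smul volume
      polarCoord.open_target.measurableSet A' hinj f]
  apply integrableOn_congr_fun _ polarCoord.open_target.measurableSet
  intro x hx
  simp only [B_det, abs_of_pos (show 0 < x.1 from hx.1)]

theorem abs_cos_integral : ∫ y in Ioo (-π) π, |cos y| = 4 := by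
  have hint : ∀ u v : ℝ, IntervalIntegrable (fun y => |cos y|) volume u v :=
    fun u v => (continuous_cos.abs).intervalIntegrable u v
  have h1 : ∫ y in Ioo (-π) π, |cos y| = ∫ y in (-π)..π, |cos y| := by
    rw [intervalIntegral.integral_of_le (by linarith [pi_pos]),
      integral_Ioc_eq_integral_Ioo]
  rw [h1,
    ← intervalIntegral.integral_add_adjacent_intervals (b := -(π/2)) (hint _ _) (hint _ _),
    ← intervalIntegral.integral_add_adjacent_intervals (a := -(π/2)) (b := π/2) (hint _ _) (hint _ _)]
  have e1 : ∫ y in (-π)..(-(π/2)), |cos y| = 1 := by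
    rw [intervalIntegral.integral_congr (g := fun y => -cos y)]
    · rw [intervalIntegral.integral_neg, integral_cos]
      simp [Real.sin_pi_div_two]
    · intro y hy
      rw [uIcc_of_le (by linarith [pi_pos])] at hy
      have : cos y ≤ 0 := by
        have := Real.cos_nonpos_of_pi_div_two_le_of_le (x := y + 2*π) (by linarith [hy.1, pi_pos]) (by linarith [hy.2, pi_pos])
        rwa [Real.cos_add_two_pi] at this
      simp [abs_of_nonpos this]
  have e2 : ∫ y in (-(π/2))..(π/2), |cos y| = 2 := by
    rw [intervalIntegral.integral_congr (g := fun y => cos y)]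
    · rw [integral_cos]; simp [Real.sin_pi_div_two]; ring
    · intro y hy
      rw [uIcc_of_le (by linarith [pi_pos])] at hy
      exact abs_of_nonneg (Real.cos_nonneg_of_mem_Icc ⟨hy.1, hy.2⟩)
  have e3 : ∫ y in (π/2)..π, |cos y| = 1 := by
    rw [intervalIntegral.integral_congr (g := fun y => -cos y)]
    · rw [intervalIntegral.integral_neg, integral_cos]
      simp [Real.sin_pi_div_two]
    · intro y hy
      rw [uIcc_of_le (by linarith [pi_pos])] at hy
      simp [abs_of_nonpos (Real.cos_nonpos_of_pi_div_two_le_of_le hy.1 (by linarith [hy.2, pi_pos]))]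
  rw [e1, e2, e3]; norm_num



theorem target_fact (ε : ℝ) (hε : 0 < ε) :
    IntegrableOn (fun p : ℝ × ℝ => (if p.1 ≤ ε then (1:ℝ) else 0) * |cos p.2|)
      (Ioi (0:ℝ) ×ˢ Ioo (-π) π) ∧
    ∫ p : ℝ × ℝ in Ioi (0:ℝ) ×ˢ Ioo (-π) π,
      (if p.1 ≤ ε then (1:ℝ) else 0) * |cos p.2| = 4 * ε := by
  have hf1 : IntegrableOn (fun x : ℝ => if x ≤ ε then (1:ℝ) else 0) (Ioi 0) := by
    have : (fun x : ℝ => if x ≤ ε then (1:ℝ) else 0) = (Iic ε).indicator (fun _ => (1:ℝ)) := by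
      ext x; simp [Set.indicator_apply]
    rw [IntegrableOn, this, integrable_indicator_iff measurableSet_Iic]
    rw [IntegrableOn, Measure.restrict_restrict measurableSet_Iic]
    have : IntegrableOn (fun _ : ℝ => (1:ℝ)) (Iic ε ∩ Ioi 0) volume := by
      refine integrableOn_const ?_
      rw [Iic_inter_Ioi, Real.volume_Ioc]
      exact ENNReal.ofReal_ne_top
    exact this
  have hf2 : IntegrableOn (fun y : ℝ => |cos y|) (Ioo (-π) π) := by
    have h : IntervalIntegrable (fun y : ℝ => |cos y|) volume (-π) π := (continuous_cos.abs).intervalIntegrable _ _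
    rw [intervalIntegrable_iff_integrableOn_Ioo_of_le (by linarith [pi_pos])] at h
    exact h
  have hr : ∫ x in Ioi (0:ℝ), (if x ≤ ε then (1:ℝ) else 0) = ε := by
    have : (fun x : ℝ => if x ≤ ε then (1:ℝ) else 0) = (Iic ε).indicator (fun _ => (1:ℝ)) := by
      ext x; simp [Set.indicator_apply]
    rw [this, setIntegral_indicator measurableSet_Iic]
    rw [setIntegral_const]
    rw [Ioi_inter_Iic, Real.volume_real_Ioc]
    simp [ENNReal.toReal_ofReal hε.le, hε.le]
  constructor
  · rw [IntegrableOn, Measure.volume_eq_prod ℝ ℝ, ← Measure.prod_restrict]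
    exact hf1.mul_prod hf2
  · rw [Measure.volume_eq_prod ℝ ℝ]
    rw [setIntegral_prod_mul (fun x : ℝ => if x ≤ ε then (1:ℝ) else 0) (fun y => |cos y|)]
    rw [hr, abs_cos_integral]; ring

theorem disk_fact (a b ε : ℝ) (hε : 0 < ε) :
    IntegrableOn (fun p : ℝ × ℝ => |a - p.1| / ((a - p.1) ^ 2 + (b - p.2) ^ 2))
      {p : ℝ × ℝ | (a - p.1) ^ 2 + (b - p.2) ^ 2 ≤ ε ^ 2} ∧
    ∫ p : ℝ × ℝ in {p : ℝ × ℝ | (a - p.1) ^ 2 + (b - p.2) ^ 2 ≤ ε ^ 2},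
      |a - p.1| / ((a - p.1) ^ 2 + (b - p.2) ^ 2) = 4 * ε := by
  set g : ℝ × ℝ → ℝ := fun q =>
    ({q : ℝ × ℝ | q.1 ^ 2 + q.2 ^ 2 ≤ ε ^ 2}).indicator (fun q => |q.1| / (q.1 ^ 2 + q.2 ^ 2)) q
    with hg
  have hS0 : MeasurableSet {q : ℝ × ℝ | q.1 ^ 2 + q.2 ^ 2 ≤ ε ^ 2} := by
    apply measurableSet_le <;> fun_prop
  have hS : MeasurableSet {p : ℝ × ℝ | (a - p.1) ^ 2 + (b - p.2) ^ 2 ≤ ε ^ 2} := by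
    apply measurableSet_le <;> fun_prop
  have htrans : ∀ p : ℝ × ℝ,
      ({p : ℝ × ℝ | (a - p.1) ^ 2 + (b - p.2) ^ 2 ≤ ε ^ 2}).indicator
        (fun p => |a - p.1| / ((a - p.1) ^ 2 + (b - p.2) ^ 2)) p = g (p - (a, b)) := by
    intro p
    have h1 : (p - (a, b)).1 = p.1 - a := rfl
    have h2 : (p - (a, b)).2 = p.2 - b := rfl
    simp only [hg, Set.indicator_apply, mem_setOf_eq, h1, h2]
    have e1 : (p.1 - a) ^ 2 = (a - p.1) ^ 2 := by ring
    have e2 : (p.2 - b) ^ 2 = (b - p.2) ^ 2 := by ring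
    rw [e1, e2, abs_sub_comm]
  -- polar computation for g
  have hpolar : ∀ p ∈ polarCoord.target,
      p.1 • g (polarCoord.symm p) = (if p.1 ≤ ε then (1:ℝ) else 0) * |cos p.2| := by
    rintro ⟨r, θ⟩ hp
    have hr : 0 < r := hp.1
    have hsymm : polarCoord.symm (r, θ) = (r * cos θ, r * sin θ) := rfl
    have hsq : (r * cos θ) ^ 2 + (r * sin θ) ^ 2 = r ^ 2 := by
      have := sin_sq_add_cos_sq θ; nlinarith
    simp only [hg, hsymm, Set.indicator_apply, mem_setOf_eq, hsq]
    have hiff : r ^ 2 ≤ ε ^ 2 ↔ r ≤ ε := by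
      constructor <;> intro h <;> nlinarith
    by_cases h : r ≤ ε
    · rw [if_pos (hiff.2 h), if_pos h]
      have : |r * cos θ| = r * |cos θ| := by
        rw [abs_mul, abs_of_pos hr]
      rw [this]
      field_simp
      rw [smul_eq_mul, ← mul_div_assoc, mul_div_cancel_left₀ _ hr.ne']
    · rw [if_neg (fun hh => h (hiff.1 hh)), if_neg h]
      simp
  have htarget := target_fact ε hε
  have hTt : polarCoord.target = Ioi (0:ℝ) ×ˢ Ioo (-π) π := rfl
  -- integrability of g
  have hgInt : Integrable g := by
    rw [← my_integrableOn_comp_polarCoord_symm]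
    apply (IntegrableOn.congr_fun htarget.1 _ polarCoord.open_target.measurableSet)
    intro p hp
    exact (hpolar p hp).symm
  have hval : ∫ q : ℝ × ℝ, g q = 4 * ε := by
    rw [← integral_comp_polarCoord_symm g, ← htarget.2]
    exact setIntegral_congr_fun polarCoord.open_target.measurableSet hpolar
  constructor
  · rw [← integrable_indicator_iff hS]
    have : ({p : ℝ × ℝ | (a - p.1) ^ 2 + (b - p.2) ^ 2 ≤ ε ^ 2}).indicator
        (fun p => |a - p.1| / ((a - p.1) ^ 2 + (b - p.2) ^ 2)) = fun p => g (p - (a, b)) := by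
      funext p; exact htrans p
    rw [this]
    exact hgInt.comp_sub_right (a, b)
  · rw [← integral_indicator hS]
    calc ∫ p : ℝ × ℝ, ({p : ℝ × ℝ | (a - p.1) ^ 2 + (b - p.2) ^ 2 ≤ ε ^ 2}).indicator
          (fun p => |a - p.1| / ((a - p.1) ^ 2 + (b - p.2) ^ 2)) p
        = ∫ p : ℝ × ℝ, g (p - (a, b)) := by
          congr 1; funext p; exact htrans p
      _ = ∫ q : ℝ × ℝ, g q := integral_sub_right_eq_self g (a, b)
      _ = 4 * ε := hval

end AuxPolarDisk



open MeasureTheory Finset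

/-- Bound (4.9) of Step III: with `z = s+it`, `λ_k = λ_{kr} + iλ_{ki}`, and
`∂/∂s ∫₀^{ε²} ln x ν_n(dx,z) = n⁻¹ ∑_k 2(s−λ_{kr})/|λ_k−z|² I(|λ_k−z| ≤ ε)`,
the integral over any measurable `T ⊆ ℝ²` of its absolute value is bounded by
`(2/n) ∑_k ∫∫_{|λ_k−z|≤ε} |λ_{kr}−s|/((λ_{kr}−s)²+(λ_{ki}−t)²) ds dt`, which equals `8ε`. -/
theorem stmt_15 {n : ℕ} (hn : 1 ≤ n) (l : Fin n → ℂ) (T : Set (ℝ × ℝ))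
    (hT : MeasurableSet T) (ε : ℝ) (hε : 0 < ε) :
    (∫ p : ℝ × ℝ in T,
        |(1 / (n : ℝ)) * ∑ k, (if ((l k).re - p.1) ^ 2 + ((l k).im - p.2) ^ 2 ≤ ε ^ 2
            then 2 * (p.1 - (l k).re) / (((l k).re - p.1) ^ 2 + ((l k).im - p.2) ^ 2)
            else 0)|
      ≤ (2 / (n : ℝ)) * ∑ k,
        ∫ p : ℝ × ℝ in {p : ℝ × ℝ | ((l k).re - p.1) ^ 2 + ((l k).im - p.2) ^ 2 ≤ ε ^ 2},
          |(l k).re - p.1| / (((l k).re - p.1) ^ 2 + ((l k).im - p.2) ^ 2)) ∧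
    (2 / (n : ℝ)) * ∑ k,
        ∫ p : ℝ × ℝ in {p : ℝ × ℝ | ((l k).re - p.1) ^ 2 + ((l k).im - p.2) ^ 2 ≤ ε ^ 2},
          |(l k).re - p.1| / (((l k).re - p.1) ^ 2 + ((l k).im - p.2) ^ 2)
      = 8 * ε := by
  have hn0 : (n : ℝ) ≠ 0 := Nat.cast_ne_zero.2 (Nat.one_le_iff_ne_zero.1 hn)
  have hnpos : (0:ℝ) < n := by positivity
  set D : Fin n → Set (ℝ × ℝ) := fun k =>
    {p : ℝ × ℝ | ((l k).re - p.1) ^ 2 + ((l k).im - p.2) ^ 2 ≤ ε ^ 2} with hD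
  have hDmeas : ∀ k, MeasurableSet (D k) := by
    intro k; apply measurableSet_le <;> fun_prop
  set F : Fin n → ℝ × ℝ → ℝ := fun k p =>
    (D k).indicator (fun p => |(l k).re - p.1| / (((l k).re - p.1) ^ 2 + ((l k).im - p.2) ^ 2)) p
    with hF
  have hdisk : ∀ k, IntegrableOn
      (fun p : ℝ × ℝ => |(l k).re - p.1| / (((l k).re - p.1) ^ 2 + ((l k).im - p.2) ^ 2)) (D k) ∧
      ∫ p : ℝ × ℝ in D k,
        |(l k).re - p.1| / (((l k).re - p.1) ^ 2 + ((l k).im - p.2) ^ 2) = 4 * ε :=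
    fun k => disk_fact (l k).re (l k).im ε hε
  have hFint : ∀ k, Integrable (F k) := fun k =>
    (integrable_indicator_iff (hDmeas k)).2 (hdisk k).1
  have hFnonneg : ∀ k p, 0 ≤ F k p := by
    intro k p
    apply Set.indicator_nonneg
    intro q _
    positivity
  set B : ℝ × ℝ → ℝ := fun p => (2 / (n:ℝ)) * ∑ k, F k p with hB
  have hBint : Integrable B :=
    (integrable_finset_sum univ fun k _ => hFint k).const_mul _
  have hBnonneg : ∀ p, 0 ≤ B p := by
    intro p
    apply mul_nonneg (by positivity)
    exact Finset.sum_nonneg fun k _ => hFnonneg k p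
  have hpt : ∀ p : ℝ × ℝ,
      |(1 / (n : ℝ)) * ∑ k, (if ((l k).re - p.1) ^ 2 + ((l k).im - p.2) ^ 2 ≤ ε ^ 2
          then 2 * (p.1 - (l k).re) / (((l k).re - p.1) ^ 2 + ((l k).im - p.2) ^ 2)
          else 0)| ≤ B p := by
    intro p
    rw [abs_mul, abs_of_nonneg (by positivity : (0:ℝ) ≤ 1 / (n:ℝ))]
    have habs : |∑ k, (if ((l k).re - p.1) ^ 2 + ((l k).im - p.2) ^ 2 ≤ ε ^ 2
        then 2 * (p.1 - (l k).re) / (((l k).re - p.1) ^ 2 + ((l k).im - p.2) ^ 2) else 0)|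
        ≤ ∑ k, 2 * F k p := by
      refine (Finset.abs_sum_le_sum_abs _ _).trans ?_
      apply Finset.sum_le_sum
      intro k _
      by_cases h : ((l k).re - p.1) ^ 2 + ((l k).im - p.2) ^ 2 ≤ ε ^ 2
      · rw [if_pos h]
        have hk : p ∈ D k := h
        have hFv : F k p = |(l k).re - p.1| / (((l k).re - p.1) ^ 2 + ((l k).im - p.2) ^ 2) :=
          Set.indicator_of_mem hk _
        rw [hFv]
        have hd : (0:ℝ) ≤ ((l k).re - p.1) ^ 2 + ((l k).im - p.2) ^ 2 := by positivity
        rw [abs_div, abs_of_nonneg hd, abs_mul, abs_sub_comm p.1 (l k).re]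
        rw [abs_of_nonneg (by norm_num : (0:ℝ) ≤ 2)]
        rw [mul_div_assoc]
      · rw [if_neg h]
        have hk : p ∉ D k := h
        have hFv : F k p = 0 := Set.indicator_of_notMem hk _
        rw [hFv]
        simp
    calc 1 / (n:ℝ) * |∑ k, (if ((l k).re - p.1) ^ 2 + ((l k).im - p.2) ^ 2 ≤ ε ^ 2
          then 2 * (p.1 - (l k).re) / (((l k).re - p.1) ^ 2 + ((l k).im - p.2) ^ 2) else 0)|
        ≤ 1 / (n:ℝ) * ∑ k, 2 * F k p :=
          mul_le_mul_of_nonneg_left habs (by positivity)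
      _ = B p := by
          rw [hB, ← Finset.mul_sum]
          ring
  have hRHS : (2 / (n : ℝ)) * ∑ k,
      ∫ p : ℝ × ℝ in D k,
        |(l k).re - p.1| / (((l k).re - p.1) ^ 2 + ((l k).im - p.2) ^ 2) = 8 * ε := by
    have : ∀ k ∈ univ (α := Fin n), (∫ p : ℝ × ℝ in D k,
        |(l k).re - p.1| / (((l k).re - p.1) ^ 2 + ((l k).im - p.2) ^ 2)) = 4 * ε :=
      fun k _ => (hdisk k).2
    rw [Finset.sum_congr rfl this, Finset.sum_const, Finset.card_univ, Fintype.card_fin,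
      nsmul_eq_mul]
    field_simp
    ring
  refine ⟨?_, hRHS⟩
  have hintB : ∫ p : ℝ × ℝ, B p = (2 / (n : ℝ)) * ∑ k,
      ∫ p : ℝ × ℝ in D k,
        |(l k).re - p.1| / (((l k).re - p.1) ^ 2 + ((l k).im - p.2) ^ 2) := by
    rw [hB]
    simp only
    rw [integral_const_mul]
    rw [integral_finset_sum univ fun k _ => hFint k]
    congr 1
    apply Finset.sum_congr rfl
    intro k _
    exact integral_indicator (hDmeas k)
  calc ∫ p : ℝ × ℝ in T,
        |(1 / (n : ℝ)) * ∑ k, (if ((l k).re - p.1) ^ 2 + ((l k).im - p.2) ^ 2 ≤ ε ^ 2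
            then 2 * (p.1 - (l k).re) / (((l k).re - p.1) ^ 2 + ((l k).im - p.2) ^ 2)
            else 0)|
      ≤ ∫ p : ℝ × ℝ in T, B p := by
        apply integral_mono_of_nonneg
        · filter_upwards with p using abs_nonneg _
        · exact hBint.integrableOn
        · filter_upwards with p using hpt p
    _ ≤ ∫ p : ℝ × ℝ, B p := by
        apply setIntegral_le_integral hBint
        filter_upwards with p using hBnonneg p
    _ = _ := hintB
end

section
/- Let μ be the uniform distribution on the unit disk {λ ∈ ℂ : |λ| ≤ 1}, and for z = s+it let ν(·,z) be the pushforward of μ under λ ↦ |λ − z|². Then for every ε > 0 and every bounded measurable region T ⊂ ℝ², ∫∫_T |∂/∂s ∫_0^{ε²} ln x ν(dx, z)| dt ds ≤ 8ε. -/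
open Real Set MeasureTheory
theorem my_lintegral_comp_polarCoord_symm (f : ℝ × ℝ → ENNReal) :
    (∫⁻ p in polarCoord.target, ENNReal.ofReal p.1 * f (polarCoord.symm p)) = ∫⁻ p, f p := by
  set B : ℝ × ℝ → ℝ × ℝ →L[ℝ] ℝ × ℝ := fun p =>
    LinearMap.toContinuousLinearMap (Matrix.toLin (Module.Basis.finTwoProd ℝ) (Module.Basis.finTwoProd ℝ)
      !![cos p.2, -p.1 * sin p.2; sin p.2, p.1 * cos p.2])
  have A : ∀ p ∈ polarCoord.symm.source, HasFDerivAt polarCoord.symm (B p) p := fun p _ =>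
    hasFDerivAt_polarCoord_symm p
  have B_det : ∀ p, (B p).det = p.1 := by
    intro p
    conv_rhs => rw [← one_mul p.1, ← cos_sq_add_sin_sq p.2]
    simp only [B, neg_mul, LinearMap.det_toContinuousLinearMap, LinearMap.det_toLin,
      Matrix.det_fin_two_of, sub_neg_eq_add]
    ring
  symm
  calc
    ∫⁻ p, f p = ∫⁻ p in polarCoord.source, f p := by
      rw [← setLIntegral_univ]
      exact setLIntegral_congr polarCoord_source_ae_eq_univ.symm
    _ = ∫⁻ p in polarCoord.symm '' polarCoord.target, f p := by
      rw [polarCoord.symm_image_target_eq_source]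
    _ = ∫⁻ p in polarCoord.target, ENNReal.ofReal |(B p).det| * f (polarCoord.symm p) := by
      apply lintegral_image_eq_lintegral_abs_det_fderiv_mul volume
        polarCoord.open_target.measurableSet
        (fun p hp => (A p hp).hasFDerivWithinAt) polarCoord.symm.injOn
    _ = ∫⁻ p in polarCoord.target, ENNReal.ofReal p.1 * f (polarCoord.symm p) := by
      apply setLIntegral_congr_fun polarCoord.open_target.measurableSet
      intro x hx
      dsimp only
      rw [B_det, abs_of_pos hx.1]
theorem my_integral_abs_cos : ∫ x in (-π)..π, |cos x| = 4 := by
  have hp := pi_pos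
  have h1 : ∫ x in (-π)..(-(π/2)), |cos x| = ∫ x in (-π)..(-(π/2)), -cos x := by
    apply intervalIntegral.integral_congr
    intro x hx
    rw [uIcc_of_le (by linarith)] at hx
    show |cos x| = -cos x
    rw [← Real.cos_neg x]
    exact abs_of_nonpos (Real.cos_nonpos_of_pi_div_two_le_of_le (by linarith [hx.2]) (by linarith [hx.1]))
  have h2 : ∫ x in (-(π/2))..(π/2), |cos x| = ∫ x in (-(π/2))..(π/2), cos x := by
    apply intervalIntegral.integral_congr
    intro x hx
    rw [uIcc_of_le (by linarith)] at hx
    exact abs_of_nonneg (Real.cos_nonneg_of_mem_Icc ⟨hx.1, hx.2⟩)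
  have h3 : ∫ x in (π/2)..π, |cos x| = ∫ x in (π/2)..π, -cos x := by
    apply intervalIntegral.integral_congr
    intro x hx
    rw [uIcc_of_le (by linarith)] at hx
    exact abs_of_nonpos (Real.cos_nonpos_of_pi_div_two_le_of_le hx.1 (by linarith [hx.2]))
  have i : ∀ a b : ℝ, IntervalIntegrable (fun x => |cos x|) volume a b := fun a b =>
    (continuous_cos.abs).intervalIntegrable a b
  rw [← intervalIntegral.integral_add_adjacent_intervals (i (-π) (-(π/2))) (i (-(π/2)) π),
    ← intervalIntegral.integral_add_adjacent_intervals (i (-(π/2)) (π/2)) (i (π/2) π),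
    h1, h2, h3, intervalIntegral.integral_neg, intervalIntegral.integral_neg]
  rw [integral_cos, integral_cos, integral_cos]
  simp
  ring
theorem my_lintegral_abs_cos_Ioo :
    ∫⁻ y in Ioo (-π) π, ENNReal.ofReal |cos y| = ENNReal.ofReal 4 := by
  rw [← ofReal_integral_eq_lintegral_ofReal]
  · congr 1
    have h2 : ∫ y in Ioo (-π) π, |cos y| = ∫ y in Ioc (-π) π, |cos y| :=
      (integral_Ioc_eq_integral_Ioo).symm
    rw [h2, ← intervalIntegral.integral_of_le (by linarith [pi_pos]), my_integral_abs_cos]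
  · exact ((continuous_cos.abs).integrableOn_Icc).mono_set Ioo_subset_Icc_self
  · filter_upwards with x using abs_nonneg _

theorem my_disk_lintegral {ε : ℝ} (hε : 0 < ε) :
    ∫⁻ p : ℝ × ℝ, ({q : ℝ × ℝ | q.1 ^ 2 + q.2 ^ 2 ≤ ε ^ 2}).indicator
      (fun q => ENNReal.ofReal (|q.1| / (q.1 ^ 2 + q.2 ^ 2))) p = ENNReal.ofReal (4 * ε) := by
  rw [← my_lintegral_comp_polarCoord_symm]
  have key : ∀ p ∈ polarCoord.target,
      ENNReal.ofReal p.1 * ({q : ℝ × ℝ | q.1 ^ 2 + q.2 ^ 2 ≤ ε ^ 2}).indicator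
        (fun q => ENNReal.ofReal (|q.1| / (q.1 ^ 2 + q.2 ^ 2))) (polarCoord.symm p)
      = (if p.1 ≤ ε then ENNReal.ofReal |cos p.2| else 0) := by
    rintro ⟨r, θ⟩ hp
    have hr : 0 < r := hp.1
    have hsymm : polarCoord.symm (r, θ) = (r * cos θ, r * sin θ) := rfl
    have hsq : (r * cos θ) ^ 2 + (r * sin θ) ^ 2 = r ^ 2 := by
      have := sin_sq_add_cos_sq θ; ring_nf; nlinarith [this]
    rw [hsymm, Set.indicator_apply]
    simp only [mem_setOf_eq, hsq]
    have hcond : r ^ 2 ≤ ε ^ 2 ↔ r ≤ ε := by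
      constructor
      · intro h; nlinarith
      · intro h; nlinarith
    rw [if_congr hcond rfl rfl]
    by_cases h : r ≤ ε
    · rw [if_pos h, if_pos h, ← ENNReal.ofReal_mul hr.le]
      congr 1
      rw [abs_mul, abs_of_pos hr]
      field_simp
    · rw [if_neg h, if_neg h, mul_zero]
  rw [setLIntegral_congr_fun (polarCoord.open_target.measurableSet)
    key]
  have htarget : polarCoord.target = Ioi (0:ℝ) ×ˢ Ioo (-π) π := rfl
  rw [htarget]
  rw [Measure.volume_eq_prod, ← Measure.prod_restrict]
  rw [lintegral_prod (fun z : ℝ × ℝ => if z.1 ≤ ε then ENNReal.ofReal |cos z.2| else 0)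
    ((Measurable.ite (measurableSet_le measurable_fst measurable_const)
    (ENNReal.measurable_ofReal.comp (continuous_cos.abs.measurable.comp measurable_snd))
    measurable_const).aemeasurable)]
  have inner : ∀ x : ℝ, ∫⁻ y in Ioo (-π) π, (if x ≤ ε then ENNReal.ofReal |cos y| else 0)
      = if x ≤ ε then ENNReal.ofReal 4 else 0 := by
    intro x
    by_cases h : x ≤ ε
    · simp only [if_pos h]; exact my_lintegral_abs_cos_Ioo
    · simp only [if_neg h, lintegral_const, zero_mul]
  simp only [inner]
  have : ∀ x : ℝ, (if x ≤ ε then ENNReal.ofReal 4 else 0)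
      = (Iic ε).indicator (fun _ => ENNReal.ofReal 4) x := by
    intro x; rw [Set.indicator_apply]; rfl
  simp only [this]
  rw [lintegral_indicator measurableSet_Iic _, Measure.restrict_restrict measurableSet_Iic,
    lintegral_const, Measure.restrict_apply MeasurableSet.univ, univ_inter]
  have : Iic ε ∩ Ioi 0 = Ioc 0 ε := by ext x; simp [and_comm]; 
  rw [this, Real.volume_Ioc, ← ENNReal.ofReal_mul (by norm_num), sub_zero]

theorem my_disk_lintegral' {ε : ℝ} (hε : 0 < ε) (a b : ℝ) :
    ∫⁻ p : ℝ × ℝ, ({q : ℝ × ℝ | (q.1 - a) ^ 2 + (q.2 - b) ^ 2 ≤ ε ^ 2}).indicator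
      (fun q => ENNReal.ofReal (|q.1 - a| / ((q.1 - a) ^ 2 + (q.2 - b) ^ 2))) p
      = ENNReal.ofReal (4 * ε) := by
  have := lintegral_add_right_eq_self (μ := (volume : Measure (ℝ × ℝ)))
    (fun q : ℝ × ℝ => ({q : ℝ × ℝ | q.1 ^ 2 + q.2 ^ 2 ≤ ε ^ 2}).indicator
      (fun q => ENNReal.ofReal (|q.1| / (q.1 ^ 2 + q.2 ^ 2))) q) (-a, -b)
  rw [← my_disk_lintegral hε, ← this]
  apply lintegral_congr
  intro q
  have : q + (-a, -b) = (q.1 - a, q.2 - b) := by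
    simp [Prod.ext_iff, sub_eq_add_neg]
  rw [this]
  rw [Set.indicator_apply, Set.indicator_apply]
  rfl
/-- For the uniform distribution on the unit disk, with
`∂/∂s ∫₀^{ε²} ln x ν(dx,z) = (2/π) ∫∫_{|λ|≤1, |λ−z|≤ε} (s−λ_r)/|λ−z|² dλ_r dλ_i`
(`z = s+it`), the integral of its absolute value over any bounded measurable region
`T ⊆ ℝ²` is at most `8ε`. -/
theorem stmt_16 (ε : ℝ) (hε : 0 < ε) (T : Set (ℝ × ℝ)) (hT : MeasurableSet T)
    (hTb : Bornology.IsBounded T) :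
    ∫ p : ℝ × ℝ in T,
        |(2 / Real.pi) *
          ∫ l : ℂ in {l : ℂ | ‖l‖ ≤ 1 ∧
              ‖l - ((p.1 : ℂ) + p.2 * Complex.I)‖ ≤ ε},
            (p.1 - l.re) / ((p.1 - l.re) ^ 2 + (p.2 - l.im) ^ 2)|
      ≤ 8 * ε := by
  have hπ := Real.pi_pos
  set g : ℝ × ℝ → ℂ → ℝ :=
    fun p l => (p.1 - l.re) / ((p.1 - l.re) ^ 2 + (p.2 - l.im) ^ 2) with hg
  set S : ℝ × ℝ → Set ℂ := fun p => {l : ℂ | ‖l‖ ≤ 1 ∧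
      ‖l - ((p.1 : ℂ) + p.2 * Complex.I)‖ ≤ ε} with hS
  set h : ℝ × ℝ → ℝ := fun p => (2 / Real.pi) * ∫ l in S p, g p l with hh
  -- measurability facts
  have hA : MeasurableSet {q : (ℝ × ℝ) × ℂ | ‖q.2‖ ≤ 1 ∧
      ‖q.2 - ((q.1.1 : ℂ) + q.1.2 * Complex.I)‖ ≤ ε} := by
    apply MeasurableSet.inter
    · exact measurableSet_le (continuous_norm.comp continuous_snd).measurable
        measurable_const
    · have hc : Continuous fun q : (ℝ × ℝ) × ℂ =>
          ‖q.2 - ((q.1.1 : ℂ) + q.1.2 * Complex.I)‖ :=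
        continuous_norm.comp (continuous_snd.sub ((Complex.continuous_ofReal.comp
          (continuous_fst.fst)).add ((Complex.continuous_ofReal.comp
          (continuous_fst.snd)).mul continuous_const)))
      exact measurableSet_le hc.measurable measurable_const
  set A : Set ((ℝ × ℝ) × ℂ) := {q : (ℝ × ℝ) × ℂ | ‖q.2‖ ≤ 1 ∧
      ‖q.2 - ((q.1.1 : ℂ) + q.1.2 * Complex.I)‖ ≤ ε} with hAdef
  set Φ : (ℝ × ℝ) × ℂ → ENNReal := fun q => ENNReal.ofReal |g q.1 q.2| with hΦdef
  have hΦ : Measurable Φ := by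
    apply ENNReal.measurable_ofReal.comp
    apply Measurable.abs
    apply Measurable.div
    · exact (measurable_fst.fst.sub (Complex.measurable_re.comp measurable_snd))
    · exact ((measurable_fst.fst.sub (Complex.measurable_re.comp measurable_snd)).pow_const 2).add
        ((measurable_fst.snd.sub (Complex.measurable_im.comp measurable_snd)).pow_const 2)
  have hSmeas : ∀ p : ℝ × ℝ, MeasurableSet (S p) := by
    intro p
    apply MeasurableSet.inter
    · exact measurableSet_le continuous_norm.measurable measurable_const
    · exact measurableSet_le (continuous_norm.comp
        (continuous_id.sub continuous_const)).measurable measurable_const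
  have habs : ∀ w : ℂ, (‖w‖ ≤ ε ↔ w.re ^ 2 + w.im ^ 2 ≤ ε ^ 2) := by
    intro w
    rw [← pow_le_pow_iff_left₀ (norm_nonneg _) hε.le two_ne_zero, Complex.sq_norm,
      Complex.normSq_apply]
    ring_nf
  -- the key lintegral bound
  have key : ∫⁻ p in T, ENNReal.ofReal |h p| ≤ ENNReal.ofReal (8 * ε) := by
    have step1 : ∀ p : ℝ × ℝ, ENNReal.ofReal |h p|
        ≤ ENNReal.ofReal (2 / Real.pi) * ∫⁻ l in S p, ENNReal.ofReal |g p l| := by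
      intro p
      rw [hh, abs_mul, abs_of_nonneg (by positivity : (0:ℝ) ≤ 2 / Real.pi),
        ENNReal.ofReal_mul (by positivity)]
      gcongr
      calc ENNReal.ofReal |∫ l in S p, g p l| = ‖∫ l in S p, g p l‖ₑ := by
            rw [Real.enorm_eq_ofReal_abs]
        _ ≤ ∫⁻ l in S p, ‖g p l‖ₑ := enorm_integral_le_lintegral_enorm _
        _ = ∫⁻ l in S p, ENNReal.ofReal |g p l| := by
            simp_rw [Real.enorm_eq_ofReal_abs]
    calc ∫⁻ p in T, ENNReal.ofReal |h p|
        ≤ ∫⁻ p in T, ENNReal.ofReal (2 / Real.pi) * ∫⁻ l in S p, ENNReal.ofReal |g p l| :=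
          lintegral_mono step1
      _ = ENNReal.ofReal (2 / Real.pi) * ∫⁻ p in T, ∫⁻ l in S p, ENNReal.ofReal |g p l| :=
          lintegral_const_mul' _ _ ENNReal.ofReal_ne_top
      _ ≤ ENNReal.ofReal (2 / Real.pi) * ∫⁻ p, ∫⁻ l in S p, ENNReal.ofReal |g p l| := by
          gcongr
          exact Measure.restrict_le_self
      _ = ENNReal.ofReal (2 / Real.pi) * ∫⁻ p, ∫⁻ l, A.indicator Φ (p, l) := by
          congr 1
          apply lintegral_congr
          intro p
          rw [← lintegral_indicator (hSmeas p)]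
          apply lintegral_congr
          intro l
          rw [Set.indicator_apply, Set.indicator_apply]
          rfl
      _ = ENNReal.ofReal (2 / Real.pi) * ∫⁻ l, ∫⁻ p, A.indicator Φ (p, l) := by
          congr 1
          exact lintegral_lintegral_swap (hΦ.indicator hA).aemeasurable
      _ = ENNReal.ofReal (2 / Real.pi) * ∫⁻ l : ℂ,
            (Metric.closedBall (0:ℂ) 1).indicator (fun _ => ENNReal.ofReal (4 * ε)) l := by
          congr 1
          apply lintegral_congr
          intro l
          by_cases hl : ‖l‖ ≤ 1
          · have hmem : l ∈ Metric.closedBall (0:ℂ) 1 := by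
              simpa [Metric.mem_closedBall, Complex.dist_eq] using hl
            rw [Set.indicator_of_mem hmem]
            have : ∀ p : ℝ × ℝ, A.indicator Φ (p, l)
                = ({q : ℝ × ℝ | (q.1 - l.re) ^ 2 + (q.2 - l.im) ^ 2 ≤ ε ^ 2}).indicator
                  (fun q => ENNReal.ofReal
                    (|q.1 - l.re| / ((q.1 - l.re) ^ 2 + (q.2 - l.im) ^ 2))) p := by
              intro p
              rw [Set.indicator_apply, Set.indicator_apply]
              have hcond : (p, l) ∈ A ↔ (p.1 - l.re) ^ 2 + (p.2 - l.im) ^ 2 ≤ ε ^ 2 := by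
                rw [hAdef]
                simp only [mem_setOf_eq]
                rw [and_iff_right hl, habs]
                constructor
                · intro hle
                  convert hle using 1
                  simp [Complex.sub_re, Complex.sub_im, Complex.add_re, Complex.add_im]
                  ring
                · intro hle
                  convert hle using 1
                  simp [Complex.sub_re, Complex.sub_im, Complex.add_re, Complex.add_im]
                  ring
              rw [if_congr hcond rfl rfl]
              congr 1
              rw [hΦdef, hg]
              simp only
              rw [abs_div, abs_of_nonneg (by positivity : (0:ℝ) ≤ (p.1 - l.re) ^ 2 + (p.2 - l.im) ^ 2)]
            simp_rw [this]
            exact my_disk_lintegral' hε l.re l.im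
          · have hnmem : l ∉ Metric.closedBall (0:ℂ) 1 := by
              simpa [Metric.mem_closedBall, Complex.dist_eq] using hl
            rw [Set.indicator_of_notMem hnmem]
            have : ∀ p : ℝ × ℝ, A.indicator Φ (p, l) = 0 := by
              intro p
              apply Set.indicator_of_notMem
              rw [hAdef]
              simp only [mem_setOf_eq, not_and]
              intro hc
              exact absurd hc hl
            simp_rw [this]
            exact lintegral_zero
      _ = ENNReal.ofReal (2 / Real.pi) * (ENNReal.ofReal (4 * ε) *
            volume (Metric.closedBall (0:ℂ) 1)) := by
          rw [lintegral_indicator measurableSet_closedBall, setLIntegral_const]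
      _ = ENNReal.ofReal (8 * ε) := by
          rw [Complex.volume_closedBall]
          have hpi : (NNReal.pi : ENNReal) = ENNReal.ofReal π := by
            rw [← NNReal.coe_real_pi, ENNReal.ofReal_coe_nnreal]
          rw [hpi, ENNReal.ofReal_one, one_pow, one_mul, ← ENNReal.ofReal_mul (by positivity),
            ← ENNReal.ofReal_mul (by positivity)]
          congr 1
          field_simp
          ring
  -- conclude
  show ∫ p in T, |h p| ∂volume ≤ 8 * ε
  by_cases hInt : Integrable (fun p => |h p|) (volume.restrict T)
  · rw [integral_eq_lintegral_of_nonneg_ae (Filter.Eventually.of_forall fun p => abs_nonneg _)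
      hInt.aestronglyMeasurable]
    exact ENNReal.toReal_le_of_le_ofReal (by positivity) key
  · rw [integral_undef hInt]
    positivity
end
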